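/- Let X and Y be n×n Hermitian complex matrices such that X ≤ (U Y Uᴴ + V Y Vᴴ)/2 in the Loewner order for some n×n unitary matrices U and V. Then for all integers i, j ≥ 0 with i + j + 1 ≤ n, λ_{i+j+1}(X) ≤ (λ_{i+1}(Y) + λ_{j+1}(Y))/2. -/

import Mathlib

open Matrix
open scoped ComplexOrder InnerProductSpace

/-- The `j`-th largest eigenvalue of a Hermitian matrix (`0`-indexed, so `eigDesc hA ⟨0, _⟩`
is the largest), counted with multiplicity. -/
noncomputable def eigDesc {n : ℕ} {A : Matrix (Fin n) (Fin n) ℂ} (hA : A.IsHermitian)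
    (j : Fin n) : ℝ :=
  hA.eigenvalues (Tuple.sort hA.eigenvalues j.rev)

/-- Applying a real function to a Hermitian matrix via the functional calculus yields a
Hermitian matrix. -/
lemma isHermitian_cfc {n : ℕ} {A : Matrix (Fin n) (Fin n) ℂ} (hA : A.IsHermitian)
    (f : ℝ → ℝ) : (hA.cfc f).IsHermitian := by
  rw [← hA.cfc_eq]
  exact cfc_predicate f A

lemma isHermitian_half_smul {n : ℕ} {X : Matrix (Fin n) (Fin n) ℂ} (hX : X.IsHermitian) :
    ((2 : ℝ)⁻¹ • X).IsHermitian := by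
  show _ = _
  rw [Matrix.conjTranspose_smul, star_trivial, hX.eq]

lemma isHermitian_sum_conj {m n : ℕ} {A : Fin m → Matrix (Fin n) (Fin n) ℂ}
    (Z : Fin m → Matrix (Fin n) (Fin n) ℂ) (hA : ∀ i, (A i).IsHermitian) :
    (∑ i, (Z i)ᴴ * A i * Z i).IsHermitian := by
  show _ = _
  rw [Matrix.conjTranspose_sum]
  exact Finset.sum_congr rfl fun i _ => (isHermitian_conjTranspose_mul_mul (Z i) (hA i)).eq


section Helpers

variable {n : ℕ}


lemma toEuclideanLin_eigenvectorBasis {Y : Matrix (Fin n) (Fin n) ℂ} (hY : Y.IsHermitian)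
    (k : Fin n) :
    Matrix.toEuclideanLin Y (hY.eigenvectorBasis k) =
      (hY.eigenvalues k : ℂ) • hY.eigenvectorBasis k := by
  apply (WithLp.equiv 2 _).injective
  rw [show (WithLp.equiv 2 _) (Matrix.toEuclideanLin Y (hY.eigenvectorBasis k)) =
      Y *ᵥ WithLp.equiv 2 _ (hY.eigenvectorBasis k) from rfl,
    show (WithLp.equiv 2 ((i : Fin n) → (fun x => ℂ) i)) ((hY.eigenvalues k : ℂ) • hY.eigenvectorBasis k) =
      (hY.eigenvalues k : ℂ) • (WithLp.equiv 2 (Fin n → ℂ)) (hY.eigenvectorBasis k) from rfl,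
    show (WithLp.equiv 2 (Fin n → ℂ)) (hY.eigenvectorBasis k) = ⇑(hY.eigenvectorBasis k) from rfl,
    hY.mulVec_eigenvectorBasis]
  ext l
  simp [Complex.real_smul]

lemma repr_toEuclideanLin {Y : Matrix (Fin n) (Fin n) ℂ} (hY : Y.IsHermitian)
    (x : EuclideanSpace ℂ (Fin n)) (k : Fin n) :
    hY.eigenvectorBasis.repr (Matrix.toEuclideanLin Y x) k =
      (hY.eigenvalues k : ℂ) * hY.eigenvectorBasis.repr x k := by
  rw [OrthonormalBasis.repr_apply_apply, OrthonormalBasis.repr_apply_apply,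
    ← (Matrix.isHermitian_iff_isSymmetric.1 hY (hY.eigenvectorBasis k) x),
    toEuclideanLin_eigenvectorBasis, inner_smul_left]
  simp

lemma re_inner_toEuclideanLin {Y : Matrix (Fin n) (Fin n) ℂ} (hY : Y.IsHermitian)
    (x : EuclideanSpace ℂ (Fin n)) :
    RCLike.re ⟪x, Matrix.toEuclideanLin Y x⟫_ℂ =
      ∑ k, hY.eigenvalues k * ‖hY.eigenvectorBasis.repr x k‖ ^ 2 := by
  rw [← hY.eigenvectorBasis.repr.inner_map_map x (Matrix.toEuclideanLin Y x)]
  rw [PiLp.inner_apply]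
  rw [map_sum]
  refine Finset.sum_congr rfl fun k _ => ?_
  rw [repr_toEuclideanLin, RCLike.inner_apply]
  rw [show (hY.eigenvalues k : ℂ) * hY.eigenvectorBasis.repr x k *
      (starRingEnd ℂ) (hY.eigenvectorBasis.repr x k) = (hY.eigenvalues k : ℂ) *
      ((starRingEnd ℂ) (hY.eigenvectorBasis.repr x k) * hY.eigenvectorBasis.repr x k) by ring,
    RCLike.conj_mul]
  simp [← Complex.ofReal_pow]

lemma re_inner_self (x : EuclideanSpace ℂ (Fin n)) {Y : Matrix (Fin n) (Fin n) ℂ}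
    (hY : Y.IsHermitian) :
    RCLike.re ⟪x, x⟫_ℂ = ∑ k, ‖hY.eigenvectorBasis.repr x k‖ ^ 2 := by
  rw [← hY.eigenvectorBasis.repr.inner_map_map x x, PiLp.inner_apply, map_sum]
  refine Finset.sum_congr rfl fun k _ => ?_
  rw [RCLike.inner_apply, RCLike.mul_conj]
  simp [← Complex.ofReal_pow]

lemma repr_eq_zero_of_mem_span {Y : Matrix (Fin n) (Fin n) ℂ} (hY : Y.IsHermitian)
    {S : Set (Fin n)} {x : EuclideanSpace ℂ (Fin n)}
    (hx : x ∈ Submodule.span ℂ (hY.eigenvectorBasis '' S)) {k : Fin n} (hk : k ∉ S) :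
    hY.eigenvectorBasis.repr x k = 0 := by
  rw [OrthonormalBasis.repr_apply_apply]
  induction hx using Submodule.span_induction with
  | mem y hy =>
    obtain ⟨l, hl, rfl⟩ := hy
    exact hY.eigenvectorBasis.orthonormal.2 (fun h : k = l => hk (h ▸ hl))
  | zero => simp
  | add y z _ _ hy hz => rw [inner_add_right, hy, hz, add_zero]
  | smul c y _ hy => rw [inner_smul_right, hy, mul_zero]

lemma quad_le_of_mem_span {Y : Matrix (Fin n) (Fin n) ℂ} (hY : Y.IsHermitian)
    {S : Set (Fin n)} {c : ℝ} (hc : ∀ k ∈ S, hY.eigenvalues k ≤ c)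
    {x : EuclideanSpace ℂ (Fin n)}
    (hx : x ∈ Submodule.span ℂ (hY.eigenvectorBasis '' S)) :
    RCLike.re ⟪x, Matrix.toEuclideanLin Y x⟫_ℂ ≤ c * RCLike.re ⟪x, x⟫_ℂ := by
  rw [re_inner_toEuclideanLin, re_inner_self x hY, Finset.mul_sum]
  refine Finset.sum_le_sum fun k _ => ?_
  by_cases hk : k ∈ S
  · exact mul_le_mul_of_nonneg_right (hc k hk) (by positivity)
  · rw [repr_eq_zero_of_mem_span hY hx hk]; simp

lemma quad_ge_of_mem_span {Y : Matrix (Fin n) (Fin n) ℂ} (hY : Y.IsHermitian)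
    {S : Set (Fin n)} {c : ℝ} (hc : ∀ k ∈ S, c ≤ hY.eigenvalues k)
    {x : EuclideanSpace ℂ (Fin n)}
    (hx : x ∈ Submodule.span ℂ (hY.eigenvectorBasis '' S)) :
    c * RCLike.re ⟪x, x⟫_ℂ ≤ RCLike.re ⟪x, Matrix.toEuclideanLin Y x⟫_ℂ := by
  rw [re_inner_toEuclideanLin, re_inner_self x hY, Finset.mul_sum]
  refine Finset.sum_le_sum fun k _ => ?_
  by_cases hk : k ∈ S
  · exact mul_le_mul_of_nonneg_right (hc k hk) (by positivity)
  · rw [repr_eq_zero_of_mem_span hY hx hk]; simp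

lemma finrank_span_eigenvectors {Y : Matrix (Fin n) (Fin n) ℂ} (hY : Y.IsHermitian)
    {m : ℕ} {g : Fin m → Fin n} (hg : Function.Injective g) :
    Module.finrank ℂ (Submodule.span ℂ
      (Set.range fun k => hY.eigenvectorBasis (g k))) = m := by
  have := finrank_span_eq_card ((hY.eigenvectorBasis.orthonormal.linearIndependent).comp g hg)
  rw [show ((⇑hY.eigenvectorBasis ∘ g) : Fin m → EuclideanSpace ℂ (Fin n)) =
    fun k => hY.eigenvectorBasis (g k) from rfl] at this
  rw [this]
  simp

lemma toEuclideanLin_mul (A B : Matrix (Fin n) (Fin n) ℂ) :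
    Matrix.toEuclideanLin (A * B) =
      (Matrix.toEuclideanLin A).comp (Matrix.toEuclideanLin B) := by
  rw [Matrix.toEuclideanLin_eq_toLin, Matrix.toLin_mul _ (PiLp.basisFun 2 ℂ (Fin n)) _]

/-- `mulVec` by a unitary matrix as a linear equivalence on Euclidean space. -/
noncomputable def unitaryEquiv {U : Matrix (Fin n) (Fin n) ℂ}
    (hU : U ∈ Matrix.unitaryGroup (Fin n) ℂ) :
    EuclideanSpace ℂ (Fin n) ≃ₗ[ℂ] EuclideanSpace ℂ (Fin n) :=
  LinearEquiv.ofLinear (Matrix.toEuclideanLin U) (Matrix.toEuclideanLin Uᴴ)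
    (by rw [← toEuclideanLin_mul, show U * Uᴴ = 1 from hU.2, show ((1 : Matrix (Fin n) (Fin n) ℂ)) = (1 : Matrix (Fin n) (Fin n) ℂ) from rfl]; simp [Matrix.toEuclideanLin_eq_toLin, Matrix.toLin_one])
    (by rw [← toEuclideanLin_mul, show Uᴴ * U = 1 from hU.1]; simp [Matrix.toEuclideanLin_eq_toLin, Matrix.toLin_one])

lemma inner_conj_unitary {U : Matrix (Fin n) (Fin n) ℂ} (Y : Matrix (Fin n) (Fin n) ℂ)
    (x : EuclideanSpace ℂ (Fin n)) :
    ⟪x, Matrix.toEuclideanLin (U * Y * Uᴴ) x⟫_ℂ =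
      ⟪Matrix.toEuclideanLin Uᴴ x, Matrix.toEuclideanLin Y (Matrix.toEuclideanLin Uᴴ x)⟫_ℂ := by
  rw [toEuclideanLin_mul, toEuclideanLin_mul]
  simp only [LinearMap.comp_apply]
  rw [← LinearMap.adjoint_inner_left, ← Matrix.toEuclideanLin_conjTranspose_eq_adjoint]

lemma inner_self_unitary {U : Matrix (Fin n) (Fin n) ℂ}
    (hU : U ∈ Matrix.unitaryGroup (Fin n) ℂ) (x : EuclideanSpace ℂ (Fin n)) :
    ⟪Matrix.toEuclideanLin Uᴴ x, Matrix.toEuclideanLin Uᴴ x⟫_ℂ = ⟪x, x⟫_ℂ := by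
  rw [← LinearMap.adjoint_inner_left, ← Matrix.toEuclideanLin_conjTranspose_eq_adjoint,
    conjTranspose_conjTranspose, ← LinearMap.comp_apply, ← toEuclideanLin_mul,
    show U * Uᴴ = 1 from hU.2]
  rw [Matrix.toEuclideanLin_eq_toLin, Matrix.toLin_one]
  simp

lemma re_inner_le_of_posSemidef {X A B : Matrix (Fin n) (Fin n) ℂ}
    (hle : ((2 : ℝ)⁻¹ • (A + B) - X).PosSemidef) (x : EuclideanSpace ℂ (Fin n)) :
    RCLike.re ⟪x, Matrix.toEuclideanLin X x⟫_ℂ ≤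
      (2 : ℝ)⁻¹ * (RCLike.re ⟪x, Matrix.toEuclideanLin A x⟫_ℂ +
        RCLike.re ⟪x, Matrix.toEuclideanLin B x⟫_ℂ) := by
  have h := hle.re_dotProduct_nonneg (WithLp.equiv 2 _ x)
  have e : ∀ M : Matrix (Fin n) (Fin n) ℂ, RCLike.re ⟪x, Matrix.toEuclideanLin M x⟫_ℂ =
      RCLike.re (dotProduct (star (WithLp.equiv 2 _ x)) (M *ᵥ WithLp.equiv 2 _ x)) :=
    fun _ => by rw [dotProduct_comm]; rfl
  rw [sub_mulVec, dotProduct_sub, map_sub, Matrix.smul_mulVec, dotProduct_smul,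
    add_mulVec, dotProduct_add, RCLike.smul_re, map_add] at h
  rw [e X, e A, e B]
  linarith


lemma upper_block {Y : Matrix (Fin n) (Fin n) ℂ} (hY : Y.IsHermitian) {i : ℕ} (hi : i < n) :
    ∃ W : Submodule ℂ (EuclideanSpace ℂ (Fin n)),
      Module.finrank ℂ W = n - i ∧
      ∀ x ∈ W, RCLike.re ⟪x, Matrix.toEuclideanLin Y x⟫_ℂ ≤
        eigDesc hY ⟨i, hi⟩ * RCLike.re ⟪x, x⟫_ℂ := by
  set σ := Tuple.sort hY.eigenvalues with hσ
  set g : Fin (n - i) → Fin n := fun k => σ (Fin.castLE (Nat.sub_le n i) k) with hg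
  refine ⟨Submodule.span ℂ (hY.eigenvectorBasis '' Set.range g), ?_, ?_⟩
  · rw [← Set.range_comp]
    exact finrank_span_eigenvectors hY
      (σ.injective.comp (Fin.castLE_injective (Nat.sub_le n i)))
  · intro x hx
    refine quad_le_of_mem_span hY (fun k hk => ?_) hx
    obtain ⟨l, rfl⟩ := hk
    have hmono := Tuple.monotone_sort hY.eigenvalues
    have : (Fin.castLE (Nat.sub_le n i) l) ≤ (⟨i, hi⟩ : Fin n).rev := by
      rw [Fin.le_def, Fin.val_rev]
      simp only [Fin.coe_castLE]
      omega
    exact hmono this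

lemma lower_block {Xm : Matrix (Fin n) (Fin n) ℂ} (hX : Xm.IsHermitian) {m : ℕ} (hm : m < n) :
    ∃ W : Submodule ℂ (EuclideanSpace ℂ (Fin n)),
      Module.finrank ℂ W = m + 1 ∧
      ∀ x ∈ W, eigDesc hX ⟨m, hm⟩ * RCLike.re ⟪x, x⟫_ℂ ≤
        RCLike.re ⟪x, Matrix.toEuclideanLin Xm x⟫_ℂ := by
  set τ := Tuple.sort hX.eigenvalues with hτ
  set g : Fin (m + 1) → Fin n := fun k => τ ⟨n - (m + 1) + k.val, by omega⟩ with hg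
  have hginj : Function.Injective g := by
    intro a b hab
    have h2 : n - (m + 1) + a.val = n - (m + 1) + b.val := congrArg Fin.val (τ.injective hab)
    exact Fin.ext (by omega)
  refine ⟨Submodule.span ℂ (hX.eigenvectorBasis '' Set.range g), ?_, ?_⟩
  · rw [← Set.range_comp]
    exact finrank_span_eigenvectors hX hginj
  · intro x hx
    refine quad_ge_of_mem_span hX (fun k hk => ?_) hx
    obtain ⟨l, rfl⟩ := hk
    have hmono := Tuple.monotone_sort hX.eigenvalues
    have : (⟨m, hm⟩ : Fin n).rev ≤ (⟨n - (m + 1) + l.val, by omega⟩ : Fin n) := by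
      rw [Fin.le_def, Fin.val_rev]
      simp only
      omega
    exact hmono this


end Helpers

/-- **Remark 1.3 (Weyl-type).** If `X ≤ (U Y Uᴴ + V Y Vᴴ)/2` for some unitaries `U, V`,
then `λ_{i+j+1}(X) ≤ (λ_{i+1}(Y) + λ_{j+1}(Y))/2` for `i, j ≥ 0` (decreasing eigenvalues,
`1`-based indexing). -/
theorem eig_add_le_of_le_mean_unitary_conj
    {n : ℕ} (X Y : Matrix (Fin n) (Fin n) ℂ) (hX : X.IsHermitian) (hY : Y.IsHermitian)
    (U V : Matrix (Fin n) (Fin n) ℂ)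
    (hU : U ∈ Matrix.unitaryGroup (Fin n) ℂ) (hV : V ∈ Matrix.unitaryGroup (Fin n) ℂ)
    (hle : ((2 : ℝ)⁻¹ • (U * Y * Uᴴ + V * Y * Vᴴ) - X).PosSemidef)
    (i j : ℕ) (hij : i + j + 1 ≤ n) :
    eigDesc hX ⟨i + j, by omega⟩ ≤
      (eigDesc hY ⟨i, by omega⟩ + eigDesc hY ⟨j, by omega⟩) / 2 := by
  obtain ⟨W1, hW1rank, hW1⟩ := upper_block hY (show i < n by omega)
  obtain ⟨W2, hW2rank, hW2⟩ := upper_block hY (show j < n by omega)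
  obtain ⟨W3, hW3rank, hW3⟩ := lower_block hX (show i + j < n by omega)
  set eU := unitaryEquiv hU with heU
  set eV := unitaryEquiv hV with heV
  set S1 := W1.map (eU : EuclideanSpace ℂ (Fin n) →ₗ[ℂ] EuclideanSpace ℂ (Fin n)) with hS1
  set S2 := W2.map (eV : EuclideanSpace ℂ (Fin n) →ₗ[ℂ] EuclideanSpace ℂ (Fin n)) with hS2
  have hS1rank : Module.finrank ℂ S1 = n - i := by
    rw [hS1, LinearEquiv.finrank_map_eq, hW1rank]
  have hS2rank : Module.finrank ℂ S2 = n - j := by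
    rw [hS2, LinearEquiv.finrank_map_eq, hW2rank]
  have hVrank : Module.finrank ℂ (EuclideanSpace ℂ (Fin n)) = n := finrank_euclideanSpace_fin
  have h12 : n - i + (n - j) ≤ n + Module.finrank ℂ ↥(S1 ⊓ S2) := by
    rw [← hS1rank, ← hS2rank, ← Submodule.finrank_sup_add_finrank_inf_eq]
    have h := Submodule.finrank_le (S1 ⊔ S2)
    omega
  have h123 : Module.finrank ℂ ↥(S1 ⊓ S2) + (i + j + 1) ≤
      n + Module.finrank ℂ ↥(S1 ⊓ S2 ⊓ W3) := by
    rw [← hW3rank, ← Submodule.finrank_sup_add_finrank_inf_eq]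
    have h := Submodule.finrank_le (S1 ⊓ S2 ⊔ W3)
    omega
  have hpos : 0 < Module.finrank ℂ ↥(S1 ⊓ S2 ⊓ W3) := by omega
  have hne : (S1 ⊓ S2 ⊓ W3) ≠ ⊥ := by
    intro h
    rw [h, finrank_bot] at hpos
    omega
  obtain ⟨x, hxP, hx0⟩ := Submodule.exists_mem_ne_zero_of_ne_bot hne
  obtain ⟨⟨hx1, hx2⟩, hx3⟩ := hxP
  have hN : 0 < RCLike.re ⟪x, x⟫_ℂ := by
    rw [inner_self_eq_norm_sq]
    exact pow_pos (norm_pos_iff.mpr hx0) 2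
  have l1 := hW3 x hx3
  have hy1 : Matrix.toEuclideanLin Uᴴ x ∈ W1 := (Submodule.mem_map_equiv (e := eU) W1).mp hx1
  have hy2 : Matrix.toEuclideanLin Vᴴ x ∈ W2 := (Submodule.mem_map_equiv (e := eV) W2).mp hx2
  have u1 := hW1 _ hy1
  have u2 := hW2 _ hy2
  rw [inner_self_unitary hU x] at u1
  rw [inner_self_unitary hV x] at u2
  rw [← inner_conj_unitary (U := U) Y x] at u1
  rw [← inner_conj_unitary (U := V) Y x] at u2
  have key := re_inner_le_of_posSemidef hle x
  have final : eigDesc hX ⟨i + j, by omega⟩ * RCLike.re ⟪x, x⟫_ℂ ≤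
      ((eigDesc hY ⟨i, by omega⟩ + eigDesc hY ⟨j, by omega⟩) / 2) * RCLike.re ⟪x, x⟫_ℂ := by
    linarith
  exact le_of_mul_le_mul_right final hN
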